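/- Consider the iterated local max algorithm on a finite simple graph G with m edges, where in each round the surviving edges are ranked by an independent, uniformly random linear order. Then for every k ≥ 0, the probability that the algorithm has not yet terminated after k rounds satisfies P(|E(G_k)| ≥ 1) ≤ m · 2^{-k}; in particular, the expected number of rounds until the edge set is empty is at most log₂(m) + 2. -/

import Mathlib

open Classical

set_option linter.unusedSectionVars false

/-- Two edges of a graph share an endpoint. -/
def shareEndpoint {V : Type*} (e f : Sym2 V) : Prop := ∃ v, v ∈ e ∧ v ∈ f

variable {V : Type*} [Fintype V] [DecidableEq V]

/-- A ranking of the edges of `G`: a bijection `E(G) ≃ {1, …, m}`. A uniformly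
random such ranking induces a uniformly random linear order on any subset of the
edges, in particular on the surviving edges of any round. -/
abbrev EdgeRanking (G : SimpleGraph V) [DecidableRel G.Adj] : Type _ :=
  {e : Sym2 V // e ∈ G.edgeFinset} ≃ Fin G.edgeFinset.card

/-- The rank of an edge under a ranking (arbitrary value on non-edges). -/
noncomputable def rk (G : SimpleGraph V) [DecidableRel G.Adj] (σ : EdgeRanking G)
    (e : Sym2 V) : ℕ :=
  if h : e ∈ G.edgeFinset then (σ ⟨e, h⟩ : ℕ) else 0

/-- An edge `e` of the surviving subgraph with edge set `E` is locally maximal under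
the ranking `σ`: `e ∈ E` and the rank of `e` is larger than the rank of any other
edge of `E` sharing an endpoint with `e`. -/
def locMaxInR (G : SimpleGraph V) [DecidableRel G.Adj] (σ : EdgeRanking G)
    (E : Finset (Sym2 V)) (e : Sym2 V) : Prop :=
  e ∈ E ∧ ∀ f ∈ E, f ≠ e → shareEndpoint e f → rk G σ f < rk G σ e

/-- One round of the local max algorithm under the ranking `σ`: remove every edge
sharing an endpoint with some locally maximal edge (including the locally maximal
edges themselves). -/
noncomputable def stepR (G : SimpleGraph V) [DecidableRel G.Adj] (σ : EdgeRanking G)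
    (E : Finset (Sym2 V)) : Finset (Sym2 V) :=
  E.filter fun f => ¬ ∃ e, locMaxInR G σ E e ∧ shareEndpoint e f

/-- The edge set of the graph `G_k` after `k` rounds of the iterated local max
algorithm, where round `i` uses the fresh random ranking `σs i`. -/
noncomputable def EseqR (G : SimpleGraph V) [DecidableRel G.Adj]
    (σs : ℕ → EdgeRanking G) : ℕ → Finset (Sym2 V)
  | 0 => G.edgeFinset
  | n + 1 => stepR G (σs n) (EseqR G σs n)

/-- Extend a finite tuple of rankings to an infinite sequence (rounds `≥ k` get a
fixed dummy ranking; they are irrelevant for the first `k` rounds). -/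
noncomputable def pad (G : SimpleGraph V) [DecidableRel G.Adj] {k : ℕ}
    (σs : Fin k → EdgeRanking G) : ℕ → EdgeRanking G := fun i =>
  if h : i < k then σs ⟨i, h⟩ else Fintype.equivFinOfCardEq (Fintype.card_coe _)

/-- The number of rounds of the iterated local max algorithm: the least `k` with
`E(G_k) = ∅`. -/
noncomputable def nRounds (G : SimpleGraph V) [DecidableRel G.Adj]
    (σs : ℕ → EdgeRanking G) : ℕ :=
  sInf {k | EseqR G σs k = ∅}

section Aux
variable (G : SimpleGraph V) [DecidableRel G.Adj]

lemma shareEndpoint_self (e : Sym2 V) : shareEndpoint e e := by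
  induction e using Sym2.ind with
  | _ u v => exact ⟨u, Sym2.mem_mk_left u v, Sym2.mem_mk_left u v⟩

lemma rk_inj (σ : EdgeRanking G) {e f : Sym2 V} (he : e ∈ G.edgeFinset)
    (hf : f ∈ G.edgeFinset) (h : rk G σ e = rk G σ f) : e = f := by
  unfold rk at h
  rw [dif_pos he, dif_pos hf] at h
  have := σ.injective (Fin.val_injective h)
  exact congrArg Subtype.val this

lemma locmax_count {E : Finset (Sym2 V)} (hE : E ⊆ G.edgeFinset) {e : Sym2 V} (he : e ∈ E) :
    (E.filter fun f => shareEndpoint e f).card *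
      (Finset.univ.filter fun σ : EdgeRanking G => locMaxInR G σ E e).card =
      Fintype.card (EdgeRanking G) := by
  set S := E.filter fun f => shareEndpoint e f with hS
  have heS : e ∈ S := Finset.mem_filter.2 ⟨he, shareEndpoint_self e⟩
  set P : Sym2 V → EdgeRanking G → Prop :=
    fun x σ => ∀ f ∈ S, f ≠ x → rk G σ f < rk G σ x with hP
  have hmax : ∀ σ : EdgeRanking G, ∃ x, x ∈ S ∧ P x σ := by
    intro σ
    obtain ⟨b, hb, hbmax⟩ := S.exists_max_image (rk G σ) ⟨e, heS⟩
    refine ⟨b, hb, fun f hf hne => ?_⟩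
    exact lt_of_le_of_ne (hbmax f hf) fun hEq =>
      hne (rk_inj G σ (hE (Finset.mem_filter.1 hf).1) (hE (Finset.mem_filter.1 hb).1) hEq)
  have huniq : ∀ (σ : EdgeRanking G) x y, x ∈ S → y ∈ S → P x σ → P y σ → x = y := by
    intro σ x y hx hy hPx hPy
    by_contra hne
    have h1 := hPx y hy (fun h => hne h.symm)
    have h2 := hPy x hx hne
    omega
  choose g hgS hgP using hmax
  have hfiber : ∀ x ∈ S, (Finset.univ.filter fun σ : EdgeRanking G => g σ = x)
      = Finset.univ.filter fun σ => P x σ := by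
    intro x hx
    ext σ
    simp only [Finset.mem_filter, Finset.mem_univ, true_and]
    constructor
    · rintro rfl; exact hgP σ
    · intro h; exact huniq σ (g σ) x (hgS σ) hx (hgP σ) h
  have hcardsum : Fintype.card (EdgeRanking G) =
      ∑ x ∈ S, (Finset.univ.filter fun σ : EdgeRanking G => P x σ).card := by
    rw [← Finset.card_univ,
      Finset.card_eq_sum_card_fiberwise (f := g) (t := S) (fun σ _ => hgS σ)]
    exact Finset.sum_congr rfl fun x hx => by rw [hfiber x hx]
  have hsame : ∀ x ∈ S, (Finset.univ.filter fun σ : EdgeRanking G => P x σ).card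
      = (Finset.univ.filter fun σ : EdgeRanking G => P e σ).card := by
    intro x hx
    rcases eq_or_ne x e with rfl | hxe
    · rfl
    have hxE : x ∈ G.edgeFinset := hE (Finset.mem_filter.1 hx).1
    have heE : e ∈ G.edgeFinset := hE he
    set τ : EdgeRanking G → EdgeRanking G :=
      fun σ => (Equiv.swap (⟨x, hxE⟩ : {a // a ∈ G.edgeFinset}) ⟨e, heE⟩).trans σ with hτ
    have hrk_other : ∀ (σ : EdgeRanking G) f, f ≠ x → f ≠ e → rk G (τ σ) f = rk G σ f := by
      intro σ f hfx hfe
      unfold rk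
      by_cases hf : f ∈ G.edgeFinset
      · rw [dif_pos hf, dif_pos hf]
        simp only [hτ, Equiv.trans_apply]
        rw [Equiv.swap_apply_of_ne_of_ne (fun h => hfx (congrArg Subtype.val h))
          (fun h => hfe (congrArg Subtype.val h))]
      · rw [dif_neg hf, dif_neg hf]
    have hrk_x : ∀ σ : EdgeRanking G, rk G (τ σ) x = rk G σ e := by
      intro σ
      unfold rk
      rw [dif_pos hxE, dif_pos heE]
      simp only [hτ, Equiv.trans_apply]
      rw [Equiv.swap_apply_left]
    have hrk_e : ∀ σ : EdgeRanking G, rk G (τ σ) e = rk G σ x := by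
      intro σ
      unfold rk
      rw [dif_pos heE, dif_pos hxE]
      simp only [hτ, Equiv.trans_apply]
      rw [Equiv.swap_apply_right]
    have hinv : ∀ σ, τ (τ σ) = σ := by
      intro σ
      simp only [hτ, ← Equiv.trans_assoc, Equiv.swap_swap, Equiv.refl_trans]
    have key1 : ∀ σ, P e σ → P x (τ σ) := by
      intro σ hPe f hf hfx
      rw [hrk_x]
      rcases eq_or_ne f e with rfl | hfe
      · rw [hrk_e]; exact hPe x hx hxe
      · rw [hrk_other σ f hfx hfe]; exact hPe f hf hfe
    have key2 : ∀ σ, P x σ → P e (τ σ) := by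
      intro σ hPx f hf hfe
      rw [hrk_e]
      rcases eq_or_ne f x with rfl | hfx
      · rw [hrk_x]; exact hPx e heS (fun h => hxe h.symm)
      · rw [hrk_other σ f hfx hfe]; exact hPx f hf hfx
    refine Finset.card_bij' (fun σ _ => τ σ) (fun σ _ => τ σ) ?_ ?_ ?_ ?_
    · intro σ hσ
      simp only [Finset.mem_filter, Finset.mem_univ, true_and] at hσ ⊢
      exact key2 σ hσ
    · intro σ hσ
      simp only [Finset.mem_filter, Finset.mem_univ, true_and] at hσ ⊢
      exact key1 σ hσ
    · intro σ _; exact hinv σ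
    · intro σ _; exact hinv σ
  have hloc : (Finset.univ.filter fun σ : EdgeRanking G => locMaxInR G σ E e)
      = Finset.univ.filter fun σ : EdgeRanking G => P e σ := by
    ext σ
    simp only [Finset.mem_filter, Finset.mem_univ, true_and]
    constructor
    · intro h f hf hne
      exact h.2 f (Finset.mem_filter.1 hf).1 hne (Finset.mem_filter.1 hf).2
    · intro h
      exact ⟨he, fun f hfE hne hsh => h f (Finset.mem_filter.2 ⟨hfE, hsh⟩) hne⟩
  rw [hloc, hcardsum, Finset.sum_congr rfl hsame, Finset.sum_const, smul_eq_mul]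

end Aux

section Aux2
variable (G : SimpleGraph V) [DecidableRel G.Adj]

lemma stepR_subset (σ : EdgeRanking G) (E : Finset (Sym2 V)) : stepR G σ E ⊆ E := by
  unfold stepR; exact Finset.filter_subset _ _

lemma card_share_locmax_le_two (σ : EdgeRanking G) {E : Finset (Sym2 V)} (f : Sym2 V) :
    ((E.filter fun e => locMaxInR G σ E e).filter fun e => shareEndpoint e f).card ≤ 2 := by
  induction f using Sym2.ind with
  | _ u v =>
  have hmem : ∀ e ∈ (E.filter fun e => locMaxInR G σ E e).filter
      fun e => shareEndpoint e s(u, v), (if u ∈ e then u else v) ∈ e := by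
    intro e he
    obtain ⟨-, w, hw1, hw2⟩ := Finset.mem_filter.1 he
    by_cases h : u ∈ e
    · simpa [h] using h
    · rw [if_neg h]
      rcases Sym2.mem_iff.1 hw2 with rfl | rfl
      · exact absurd hw1 h
      · exact hw1
  have key : ((E.filter fun e => locMaxInR G σ E e).filter
      fun e => shareEndpoint e s(u, v)).card ≤ ({u, v} : Finset V).card := by
    apply Finset.card_le_card_of_injOn (fun e => if u ∈ e then u else v)
    · intro e he
      by_cases h : u ∈ e <;> simp [h]
    · intro e1 h1 e2 h2 hEq
      simp only [Finset.coe_filter, Set.mem_setOf_eq] at h1 h2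
      obtain ⟨h1', hsh1⟩ := h1
      obtain ⟨h2', hsh2⟩ := h2
      have hl1 : locMaxInR G σ E e1 := (Finset.mem_filter.1 h1').2
      have hl2 : locMaxInR G σ E e2 := (Finset.mem_filter.1 h2').2
      have hw1 := hmem e1 (Finset.mem_filter.2 ⟨h1', hsh1⟩)
      have hw2 := hmem e2 (Finset.mem_filter.2 ⟨h2', hsh2⟩)
      simp only [] at hEq
      rw [show (if u ∈ e1 then u else v) = (if u ∈ e2 then u else v) from hEq] at hw1
      by_contra hne
      have ha := hl1.2 e2 hl2.1 (fun h => hne h.symm)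
        ⟨_, hw1, hw2⟩
      have hb := hl2.2 e1 hl1.1 hne ⟨_, hw2, hw1⟩
      omega
  calc _ ≤ ({u, v} : Finset V).card := key
    _ ≤ 2 := by
        refine le_trans (Finset.card_insert_le _ _) ?_
        simp

lemma step_bound (σ : EdgeRanking G) (E : Finset (Sym2 V)) :
    2 * (stepR G σ E).card + ∑ e ∈ E.filter (fun e => locMaxInR G σ E e),
        (E.filter fun f => shareEndpoint e f).card ≤ 2 * E.card := by
  set L := E.filter fun e => locMaxInR G σ E e with hL
  have hswap : ∑ e ∈ L, (E.filter fun f => shareEndpoint e f).card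
      = ∑ f ∈ E, (L.filter fun e => shareEndpoint e f).card := by
    simp_rw [Finset.card_filter]
    exact Finset.sum_comm
  have hzero : ∀ f ∈ stepR G σ E, (L.filter fun e => shareEndpoint e f).card = 0 := by
    intro f hf
    rw [Finset.card_eq_zero, Finset.filter_eq_empty_iff]
    intro e heL hsh
    exact (Finset.mem_filter.1 hf).2 ⟨e, (Finset.mem_filter.1 heL).2, hsh⟩
  have hsub := stepR_subset G σ E
  have hsplit : ∑ f ∈ E, (L.filter fun e => shareEndpoint e f).card
      = ∑ f ∈ E \ stepR G σ E, (L.filter fun e => shareEndpoint e f).card := by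
    rw [← Finset.sum_sdiff hsub, Finset.sum_eq_zero hzero, add_zero]
  have hbound : ∑ f ∈ E \ stepR G σ E, (L.filter fun e => shareEndpoint e f).card
      ≤ (E \ stepR G σ E).card * 2 := by
    apply Finset.sum_le_card_nsmul
    intro f _
    exact card_share_locmax_le_two G σ f
  have hcard : (E \ stepR G σ E).card = E.card - (stepR G σ E).card :=
    Finset.card_sdiff_of_subset hsub
  have hle : (stepR G σ E).card ≤ E.card := Finset.card_le_card hsub
  rw [hswap, hsplit]
  omega

lemma core_sum (E : Finset (Sym2 V)) (hE : E ⊆ G.edgeFinset) :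
    2 * ∑ σ : EdgeRanking G, (stepR G σ E).card
      ≤ Fintype.card (EdgeRanking G) * E.card := by
  have h2 : ∑ σ : EdgeRanking G, ∑ e ∈ E.filter (fun e => locMaxInR G σ E e),
      (E.filter fun f => shareEndpoint e f).card
      = Fintype.card (EdgeRanking G) * E.card := by
    have hstep : ∀ σ : EdgeRanking G, ∑ e ∈ E.filter (fun e => locMaxInR G σ E e),
        (E.filter fun f => shareEndpoint e f).card
        = ∑ e ∈ E, if locMaxInR G σ E e then (E.filter fun f => shareEndpoint e f).card else 0 :=
      fun σ => Finset.sum_filter _ _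
    simp_rw [hstep]
    rw [Finset.sum_comm]
    have hinner : ∀ e ∈ E, (∑ σ : EdgeRanking G,
        if locMaxInR G σ E e then (E.filter fun f => shareEndpoint e f).card else 0)
        = Fintype.card (EdgeRanking G) := by
      intro e he
      rw [← Finset.sum_filter, Finset.sum_const, smul_eq_mul, mul_comm]
      exact locmax_count G hE he
    rw [Finset.sum_congr rfl hinner, Finset.sum_const, smul_eq_mul, mul_comm]
  have h3 : (∑ σ : EdgeRanking G, (2 * (stepR G σ E).card
      + ∑ e ∈ E.filter (fun e => locMaxInR G σ E e),
        (E.filter fun f => shareEndpoint e f).card))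
      ≤ ∑ _σ : EdgeRanking G, 2 * E.card :=
    Finset.sum_le_sum fun σ _ => step_bound G σ E
  rw [Finset.sum_add_distrib, h2, ← Finset.mul_sum, Finset.sum_const, smul_eq_mul,
    Finset.card_univ] at h3
  set N := Fintype.card (EdgeRanking G)
  set s := ∑ σ : EdgeRanking G, (stepR G σ E).card
  nlinarith [h3]

end Aux2

section Seq
variable (G : SimpleGraph V) [DecidableRel G.Adj]

lemma EseqR_zero (σs : ℕ → EdgeRanking G) : EseqR G σs 0 = G.edgeFinset := rfl

lemma EseqR_succ (σs : ℕ → EdgeRanking G) (n : ℕ) :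
    EseqR G σs (n + 1) = stepR G (σs n) (EseqR G σs n) := rfl

lemma EseqR_subset (σs : ℕ → EdgeRanking G) (k : ℕ) : EseqR G σs k ⊆ G.edgeFinset := by
  induction k with
  | zero => exact subset_rfl
  | succ n ih => exact (stepR_subset G (σs n) _).trans ih

lemma EseqR_congr (σs σs' : ℕ → EdgeRanking G) (k : ℕ)
    (h : ∀ i, i < k → σs i = σs' i) : EseqR G σs k = EseqR G σs' k := by
  induction k with
  | zero => rfl
  | succ n ih =>
    rw [EseqR_succ, EseqR_succ, ih (fun i hi => h i (Nat.lt_succ_of_lt hi)),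
      h n (Nat.lt_succ_self n)]

lemma pad_snoc (n : ℕ) (p : Fin n → EdgeRanking G) (x : EdgeRanking G) (i : ℕ)
    (h : i < n) : pad G (Fin.snoc p x) i = pad G p i := by
  unfold pad
  rw [dif_pos (Nat.lt_succ_of_lt h), dif_pos h]
  have h2 : (⟨i, Nat.lt_succ_of_lt h⟩ : Fin (n + 1)) = Fin.castSucc ⟨i, h⟩ := rfl
  rw [h2, Fin.snoc_castSucc]

lemma pad_snoc_last (n : ℕ) (p : Fin n → EdgeRanking G) (x : EdgeRanking G) :
    pad G (Fin.snoc p x) n = x := by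
  unfold pad
  rw [dif_pos (Nat.lt_succ_self n)]
  have h2 : (⟨n, Nat.lt_succ_self n⟩ : Fin (n + 1)) = Fin.last n := rfl
  rw [h2, Fin.snoc_last]

lemma EseqR_pad_snoc (n : ℕ) (p : Fin n → EdgeRanking G) (x : EdgeRanking G) (k : ℕ)
    (hk : k ≤ n) : EseqR G (pad G (Fin.snoc p x)) k = EseqR G (pad G p) k :=
  EseqR_congr G _ _ k fun i hi => pad_snoc G n p x i (lt_of_lt_of_le hi hk)

lemma lemA : ∀ n k, k ≤ n →
    2 ^ k * ∑ σs : Fin n → EdgeRanking G, (EseqR G (pad G σs) k).card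
      ≤ G.edgeFinset.card * Fintype.card (EdgeRanking G) ^ n := by
  intro n
  induction n with
  | zero =>
    intro k hk
    interval_cases k
    simp [EseqR_zero]
  | succ n ih =>
    intro k hk
    have hsum : ∀ F : (Fin (n + 1) → EdgeRanking G) → ℕ,
        ∑ σs : Fin (n + 1) → EdgeRanking G, F σs
        = ∑ q : EdgeRanking G × (Fin n → EdgeRanking G), F (Fin.snoc q.2 q.1) := by
      intro F
      exact (Fintype.sum_equiv (Fin.snocEquiv (fun _ => EdgeRanking G))
        (fun q => F (Fin.snoc q.2 q.1)) F (fun q => rfl)).symm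
    rw [hsum]
    rcases Nat.lt_succ_iff_lt_or_eq.1 (Nat.lt_succ_of_le hk) with hlt | rfl
    · have hcongr : ∀ q : EdgeRanking G × (Fin n → EdgeRanking G),
          (EseqR G (pad G (Fin.snoc q.2 q.1)) k).card
          = (EseqR G (pad G q.2) k).card := fun q => by
        rw [EseqR_pad_snoc G n q.2 q.1 k (Nat.lt_succ_iff.1 hlt)]
      rw [Finset.sum_congr rfl (fun q _ => hcongr q), Fintype.sum_prod_type]
      calc 2 ^ k * ∑ _x : EdgeRanking G, ∑ p : Fin n → EdgeRanking G,
            (EseqR G (pad G p) k).card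
          = Fintype.card (EdgeRanking G)
            * (2 ^ k * ∑ p : Fin n → EdgeRanking G, (EseqR G (pad G p) k).card) := by
            rw [Finset.sum_const, smul_eq_mul, Finset.card_univ]; ring
        _ ≤ Fintype.card (EdgeRanking G)
            * (G.edgeFinset.card * Fintype.card (EdgeRanking G) ^ n) :=
            Nat.mul_le_mul_left _ (ih k (Nat.lt_succ_iff.1 hlt))
        _ = G.edgeFinset.card * Fintype.card (EdgeRanking G) ^ (n + 1) := by ring
    · have hcongr : ∀ q : EdgeRanking G × (Fin n → EdgeRanking G),
          (EseqR G (pad G (Fin.snoc q.2 q.1)) (n + 1)).card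
          = (stepR G q.1 (EseqR G (pad G q.2) n)).card := fun q => by
        rw [EseqR_succ, pad_snoc_last, EseqR_pad_snoc G n q.2 q.1 n le_rfl]
      rw [Finset.sum_congr rfl (fun q _ => hcongr q), Fintype.sum_prod_type,
        Finset.sum_comm]
      calc 2 ^ (n + 1) * ∑ p : Fin n → EdgeRanking G, ∑ x : EdgeRanking G,
            (stepR G x (EseqR G (pad G p) n)).card
          = 2 ^ n * ∑ p : Fin n → EdgeRanking G, 2 * ∑ x : EdgeRanking G,
            (stepR G x (EseqR G (pad G p) n)).card := by
            rw [← Finset.mul_sum]; ring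
        _ ≤ 2 ^ n * ∑ p : Fin n → EdgeRanking G,
            Fintype.card (EdgeRanking G) * (EseqR G (pad G p) n).card :=
            Nat.mul_le_mul_left _ (Finset.sum_le_sum fun p _ =>
              core_sum G _ (EseqR_subset G _ n))
        _ = Fintype.card (EdgeRanking G)
            * (2 ^ n * ∑ p : Fin n → EdgeRanking G, (EseqR G (pad G p) n).card) := by
            rw [← Finset.mul_sum]; ring
        _ ≤ Fintype.card (EdgeRanking G)
            * (G.edgeFinset.card * Fintype.card (EdgeRanking G) ^ n) :=
            Nat.mul_le_mul_left _ (ih n le_rfl)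
        _ = G.edgeFinset.card * Fintype.card (EdgeRanking G) ^ (n + 1) := by ring

lemma countB (n k : ℕ) (hk : k ≤ n) :
    (Finset.univ.filter fun σs : Fin n → EdgeRanking G =>
        1 ≤ (EseqR G (pad G σs) k).card).card * 2 ^ k
      ≤ G.edgeFinset.card * Fintype.card (EdgeRanking G) ^ n := by
  have h1 : (Finset.univ.filter fun σs : Fin n → EdgeRanking G =>
      1 ≤ (EseqR G (pad G σs) k).card).card
      ≤ ∑ σs : Fin n → EdgeRanking G, (EseqR G (pad G σs) k).card := by
    rw [Finset.card_filter]
    exact Finset.sum_le_sum fun σs _ => by split <;> omega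
  calc (Finset.univ.filter fun σs : Fin n → EdgeRanking G =>
        1 ≤ (EseqR G (pad G σs) k).card).card * 2 ^ k
      ≤ (∑ σs : Fin n → EdgeRanking G, (EseqR G (pad G σs) k).card) * 2 ^ k :=
        Nat.mul_le_mul_right _ h1
    _ = 2 ^ k * ∑ σs : Fin n → EdgeRanking G, (EseqR G (pad G σs) k).card :=
        mul_comm _ _
    _ ≤ _ := lemA G n k hk

lemma stepR_card_lt (σ : EdgeRanking G) {E : Finset (Sym2 V)} (hE : E ⊆ G.edgeFinset)
    (hne : E.Nonempty) : (stepR G σ E).card < E.card := by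
  obtain ⟨b, hb, hmax⟩ := E.exists_max_image (rk G σ) hne
  have hloc : locMaxInR G σ E b := ⟨hb, fun f hf hne' _ =>
    lt_of_le_of_ne (hmax f hf) fun h => hne' (rk_inj G σ (hE hf) (hE hb) h)⟩
  have hnotin : b ∉ stepR G σ E := by
    intro hmem
    unfold stepR at hmem
    exact (Finset.mem_filter.1 hmem).2 ⟨b, hloc, shareEndpoint_self b⟩
  exact Finset.card_lt_card
    ((Finset.ssubset_iff_of_subset (stepR_subset G σ E)).2 ⟨b, hb, hnotin⟩)

lemma stepR_empty (σ : EdgeRanking G) : stepR G σ ∅ = ∅ := by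
  unfold stepR; exact Finset.filter_empty _

lemma EseqR_empty_of_ge (σs : ℕ → EdgeRanking G) {k j : ℕ}
    (h : EseqR G σs k = ∅) (hkj : k ≤ j) : EseqR G σs j = ∅ := by
  induction j, hkj using Nat.le_induction with
  | base => exact h
  | succ n hn ih => rw [EseqR_succ, ih, stepR_empty]

lemma EseqR_edge_empty (σs : ℕ → EdgeRanking G) :
    EseqR G σs G.edgeFinset.card = ∅ := by
  have key : ∀ k, EseqR G σs k = ∅ ∨ (EseqR G σs k).card + k ≤ G.edgeFinset.card := by
    intro k
    induction k with
    | zero => right; rw [EseqR_zero]; omega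
    | succ n ih =>
      rcases ih with h | h
      · left; exact EseqR_empty_of_ge G σs h (Nat.le_succ n)
      · rcases Finset.eq_empty_or_nonempty (EseqR G σs n) with he | hne
        · left; exact EseqR_empty_of_ge G σs he (Nat.le_succ n)
        · right
          have := stepR_card_lt G (σs n) (EseqR_subset G σs n) hne
          rw [EseqR_succ]
          omega
  rcases key G.edgeFinset.card with h | h
  · exact h
  · exact Finset.card_eq_zero.1 (by omega)

lemma nRounds_le (σs : ℕ → EdgeRanking G) : nRounds G σs ≤ G.edgeFinset.card :=
  Nat.sInf_le (EseqR_edge_empty G σs)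

lemma EseqR_empty_iff (σs : ℕ → EdgeRanking G) (k : ℕ) :
    EseqR G σs k = ∅ ↔ nRounds G σs ≤ k := by
  constructor
  · intro h; exact Nat.sInf_le h
  · intro h
    have hmem : EseqR G σs (nRounds G σs) = ∅ :=
      Nat.sInf_mem (⟨G.edgeFinset.card, EseqR_edge_empty G σs⟩ :
        {k | EseqR G σs k = ∅}.Nonempty)
    exact EseqR_empty_of_ge G σs hmem h

lemma nRounds_eq_sum (σs : ℕ → EdgeRanking G) :
    nRounds G σs = ∑ k ∈ Finset.range G.edgeFinset.card,
      if 1 ≤ (EseqR G σs k).card then 1 else 0 := by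
  have h1 : ∀ k, (if 1 ≤ (EseqR G σs k).card then 1 else 0)
      = if k < nRounds G σs then 1 else 0 := by
    intro k
    have : 1 ≤ (EseqR G σs k).card ↔ k < nRounds G σs := by
      rw [← not_iff_not]
      push_neg
      rw [Nat.lt_one_iff, Finset.card_eq_zero, EseqR_empty_iff]
    by_cases h : 1 ≤ (EseqR G σs k).card
    · rw [if_pos h, if_pos (this.1 h)]
    · rw [if_neg h, if_neg (fun hh => h (this.2 hh))]
  simp_rw [h1]
  rw [← Finset.card_filter]
  have h2 : (Finset.range G.edgeFinset.card).filter (fun k => k < nRounds G σs)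
      = Finset.range (nRounds G σs) := by
    have := nRounds_le G σs
    ext a
    simp only [Finset.mem_filter, Finset.mem_range]
    omega
  rw [h2, Finset.card_range]

end Seq

lemma analytic (m : ℕ) (hm : 1 ≤ m) :
    ∑ k ∈ Finset.range m, min 1 ((m : ℝ) * (2 : ℝ)⁻¹ ^ k)
      ≤ Real.logb 2 (m : ℝ) + 2 := by
  have hm1 : (1 : ℝ) ≤ (m : ℝ) := by exact_mod_cast hm
  have hm0 : (0 : ℝ) < (m : ℝ) := by linarith
  set L := Real.logb 2 (m : ℝ) with hL
  have hL0 : 0 ≤ L := Real.logb_nonneg one_lt_two hm1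
  set t := Nat.floor L + 1 with ht
  have htL : (t : ℝ) ≤ L + 1 := by
    have := Nat.floor_le hL0
    push_cast [ht]
    linarith
  have hLt : L < (t : ℝ) := by
    have := Nat.lt_floor_add_one L
    push_cast [ht]
    linarith
  have humin : ∀ k : ℕ, (0:ℝ) ≤ min 1 ((m : ℝ) * (2 : ℝ)⁻¹ ^ k) := by
    intro k
    apply le_min
    · norm_num
    · positivity
  set M := max m t with hM
  have hsplit : ∑ k ∈ Finset.range m, min 1 ((m : ℝ) * (2 : ℝ)⁻¹ ^ k)
      ≤ (t : ℝ) + 2 * ((m : ℝ) * (2 : ℝ)⁻¹ ^ t) := by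
    have h1 : ∑ k ∈ Finset.range m, min 1 ((m : ℝ) * (2 : ℝ)⁻¹ ^ k)
        ≤ ∑ k ∈ Finset.range M, min 1 ((m : ℝ) * (2 : ℝ)⁻¹ ^ k) :=
      Finset.sum_le_sum_of_subset_of_nonneg
        (Finset.range_subset_range.2 (le_max_left m t)) (fun k _ _ => humin k)
    have h2 : ∑ k ∈ Finset.range M, min 1 ((m : ℝ) * (2 : ℝ)⁻¹ ^ k)
        = (∑ k ∈ Finset.range t, min 1 ((m : ℝ) * (2 : ℝ)⁻¹ ^ k))
          + ∑ k ∈ Finset.Ico t M, min 1 ((m : ℝ) * (2 : ℝ)⁻¹ ^ k) := by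
      rw [Finset.range_eq_Ico, Finset.range_eq_Ico]
      exact (Finset.sum_Ico_consecutive _ (Nat.zero_le t) (le_max_right m t)).symm
    have h3 : ∑ k ∈ Finset.range t, min 1 ((m : ℝ) * (2 : ℝ)⁻¹ ^ k) ≤ (t : ℝ) := by
      calc ∑ k ∈ Finset.range t, min 1 ((m : ℝ) * (2 : ℝ)⁻¹ ^ k)
          ≤ ∑ _k ∈ Finset.range t, (1 : ℝ) :=
            Finset.sum_le_sum fun k _ => min_le_left _ _
        _ = (t : ℝ) := by simp
    have h4 : ∑ k ∈ Finset.Ico t M, min 1 ((m : ℝ) * (2 : ℝ)⁻¹ ^ k)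
        ≤ 2 * ((m : ℝ) * (2 : ℝ)⁻¹ ^ t) := by
      calc ∑ k ∈ Finset.Ico t M, min 1 ((m : ℝ) * (2 : ℝ)⁻¹ ^ k)
          ≤ ∑ k ∈ Finset.Ico t M, (m : ℝ) * (2 : ℝ)⁻¹ ^ k :=
            Finset.sum_le_sum fun k _ => min_le_right _ _
        _ = (m : ℝ) * ((2 : ℝ)⁻¹ ^ t * ∑ j ∈ Finset.range (M - t), (2 : ℝ)⁻¹ ^ j) := by
            rw [← Finset.mul_sum, Finset.sum_Ico_eq_sum_range]
            congr 1
            rw [Finset.mul_sum]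
            exact Finset.sum_congr rfl fun j _ => by rw [← pow_add]
        _ ≤ (m : ℝ) * ((2 : ℝ)⁻¹ ^ t * 2) := by
            have hgeom : ∑ j ∈ Finset.range (M - t), (2 : ℝ)⁻¹ ^ j ≤ 2 := by
              rw [geom_sum_eq (by norm_num : (2:ℝ)⁻¹ ≠ 1)]
              have hp : (0:ℝ) ≤ (2:ℝ)⁻¹ ^ (M - t) := by positivity
              rw [div_le_iff_of_neg (by norm_num : (2:ℝ)⁻¹ - 1 < 0)]
              linarith
            have hpos : (0:ℝ) ≤ (2 : ℝ)⁻¹ ^ t := by positivity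
            have := mul_le_mul_of_nonneg_left hgeom hpos
            nlinarith
        _ = 2 * ((m : ℝ) * (2 : ℝ)⁻¹ ^ t) := by ring
    linarith
  have hfinal : (t : ℝ) + 2 * ((m : ℝ) * (2 : ℝ)⁻¹ ^ t) ≤ L + 2 := by
    set x := (t : ℝ) - L with hx
    have hx0 : 0 < x := by simp [hx]; linarith
    have hx1 : x ≤ 1 := by simp [hx]; linarith
    have hrw : (m : ℝ) * (2 : ℝ)⁻¹ ^ t = (2 : ℝ) ^ (-x) := by
      have h1 : (m : ℝ) = (2 : ℝ) ^ L :=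
        (Real.rpow_logb (by norm_num) (by norm_num) hm0).symm
      have h2 : (2 : ℝ)⁻¹ ^ t = (2 : ℝ) ^ (-(t : ℝ)) := by
        rw [inv_pow, ← Real.rpow_natCast (2:ℝ) t,
          ← Real.rpow_neg (by norm_num : (0:ℝ) ≤ 2)]
      rw [h1, h2, ← Real.rpow_add (by norm_num)]
      congr 1
      simp [hx]
      ring
    have hexp : (2 : ℝ) ^ (-x) ≤ 1 - x / 2 := by
      have hconv := convexOn_exp.2 (Set.mem_univ (0:ℝ))
        (Set.mem_univ (-Real.log 2))
        (show (0:ℝ) ≤ 1 - x by linarith) (le_of_lt hx0)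
        (show (1 - x) + x = 1 by ring)
      simp only [smul_eq_mul, mul_zero, zero_add, Real.exp_zero, mul_one] at hconv
      have hlog : Real.exp (-Real.log 2) = 2⁻¹ := by
        rw [Real.exp_neg, Real.exp_log (by norm_num)]
      rw [hlog] at hconv
      have hrpow : (2 : ℝ) ^ (-x) = Real.exp (x * -Real.log 2) := by
        rw [Real.rpow_def_of_pos (by norm_num)]
        ring_nf
      rw [hrpow]
      calc Real.exp (x * -Real.log 2) ≤ 1 - x + x * 2⁻¹ := hconv
        _ = 1 - x / 2 := by ring
    rw [hrw]
    linarith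
  linarith


/-- Consider the iterated local max algorithm on a finite simple
graph `G` with `m` edges, with fresh uniformly random rankings in each round. Then
for every `k ≥ 0` the probability that the algorithm has not terminated after `k`
rounds satisfies `P(|E(G_k)| ≥ 1) ≤ m · 2^{-k}`; in particular the expected number
of rounds until the edge set is empty is at most `log₂ m + 2`. (The number of
rounds is determined by the rankings of the first `m` rounds, since the algorithm
always terminates within `m` rounds.) -/
theorem stmt16 (G : SimpleGraph V) [DecidableRel G.Adj] :
    (∀ k : ℕ,
      ((Finset.univ.filter fun σs : Fin k → EdgeRanking G =>
            1 ≤ (EseqR G (pad G σs) k).card).card : ℝ) /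
          (Fintype.card (Fin k → EdgeRanking G) : ℝ) ≤
        (G.edgeFinset.card : ℝ) * (2 : ℝ)⁻¹ ^ k) ∧
    (∑ σs : Fin G.edgeFinset.card → EdgeRanking G, (nRounds G (pad G σs) : ℝ)) /
        (Fintype.card (Fin G.edgeFinset.card → EdgeRanking G) : ℝ) ≤
      Real.logb 2 (G.edgeFinset.card : ℝ) + 2 := by
  have hNe : Nonempty (EdgeRanking G) := ⟨Fintype.equivFinOfCardEq (Fintype.card_coe _)⟩
  have hN : 0 < Fintype.card (EdgeRanking G) := Fintype.card_pos
  constructor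
  · intro k
    have hcard : Fintype.card (Fin k → EdgeRanking G)
        = Fintype.card (EdgeRanking G) ^ k := by
      rw [Fintype.card_fun, Fintype.card_fin]
    set C := (Finset.univ.filter fun σs : Fin k → EdgeRanking G =>
      1 ≤ (EseqR G (pad G σs) k).card).card with hC
    have h := countB G k k le_rfl
    have hcast : (C : ℝ) * 2 ^ k
        ≤ (G.edgeFinset.card : ℝ) * (Fintype.card (EdgeRanking G) : ℝ) ^ k := by
      exact_mod_cast h
    have hNk : (0 : ℝ) < ((Fintype.card (EdgeRanking G) : ℝ)) ^ k := by positivity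
    have h2 : (0 : ℝ) < (2 : ℝ) ^ k := by positivity
    rw [hcard]
    push_cast
    rw [div_le_iff₀ hNk]
    calc (C : ℝ) = (C : ℝ) * 2 ^ k / 2 ^ k := by field_simp
      _ ≤ (G.edgeFinset.card : ℝ) * (Fintype.card (EdgeRanking G) : ℝ) ^ k / 2 ^ k := by
          gcongr
      _ = (G.edgeFinset.card : ℝ) * (2 : ℝ)⁻¹ ^ k
          * (Fintype.card (EdgeRanking G) : ℝ) ^ k := by
          rw [inv_pow]; ring
  · set m := G.edgeFinset.card with hm
    have hcard : Fintype.card (Fin m → EdgeRanking G)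
        = Fintype.card (EdgeRanking G) ^ m := by
      rw [Fintype.card_fun, Fintype.card_fin]
    rcases Nat.eq_zero_or_pos m with hm0 | hm1
    · have hzero : ∀ σs : Fin m → EdgeRanking G, nRounds G (pad G σs) = 0 := by
        intro σs
        apply Nat.sInf_eq_zero.2
        left
        show EseqR G (pad G σs) 0 = ∅
        rw [EseqR_zero]
        exact Finset.card_eq_zero.1 hm0
      have hlhs : (∑ σs : Fin m → EdgeRanking G, (nRounds G (pad G σs) : ℝ)) = 0 := by
        rw [Finset.sum_eq_zero]
        intro σs _
        rw [hzero σs]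
        norm_num
      rw [hlhs, zero_div, ← hm, hm0]
      push_cast
      rw [Real.logb_zero]
      norm_num
    · have hswap : (∑ σs : Fin m → EdgeRanking G, (nRounds G (pad G σs) : ℝ))
          = ∑ k ∈ Finset.range m,
            ((Finset.univ.filter fun σs : Fin m → EdgeRanking G =>
              1 ≤ (EseqR G (pad G σs) k).card).card : ℝ) := by
        have h1 : ∀ σs : Fin m → EdgeRanking G, (nRounds G (pad G σs) : ℝ)
            = ∑ k ∈ Finset.range m,
              (if 1 ≤ (EseqR G (pad G σs) k).card then (1 : ℝ) else 0) := by
          intro σs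
          rw [nRounds_eq_sum]
          push_cast
          exact Finset.sum_congr rfl fun k _ => by split <;> norm_num
        simp_rw [h1]
        rw [Finset.sum_comm]
        exact Finset.sum_congr rfl fun k _ => Finset.sum_boole _ _
      have hterm : ∀ k ∈ Finset.range m,
          ((Finset.univ.filter fun σs : Fin m → EdgeRanking G =>
            1 ≤ (EseqR G (pad G σs) k).card).card : ℝ)
          ≤ ((Fintype.card (EdgeRanking G) : ℝ)) ^ m
            * min 1 ((m : ℝ) * (2 : ℝ)⁻¹ ^ k) := by
        intro k hk
        rw [mul_min_of_nonneg _ _ (by positivity)]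
        apply le_min
        · rw [mul_one]
          have h1 : (Finset.univ.filter fun σs : Fin m → EdgeRanking G =>
              1 ≤ (EseqR G (pad G σs) k).card).card
              ≤ Fintype.card (EdgeRanking G) ^ m := by
            rw [← hcard, ← Finset.card_univ]
            exact Finset.card_filter_le _ _
          exact_mod_cast h1
        · have h := countB G m k (le_of_lt (Finset.mem_range.1 hk))
          have hcast : ((Finset.univ.filter fun σs : Fin m → EdgeRanking G =>
              1 ≤ (EseqR G (pad G σs) k).card).card : ℝ) * 2 ^ k
              ≤ (m : ℝ) * (Fintype.card (EdgeRanking G) : ℝ) ^ m := by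
            exact_mod_cast h
          have h2 : (0 : ℝ) < (2 : ℝ) ^ k := by positivity
          calc ((Finset.univ.filter fun σs : Fin m → EdgeRanking G =>
              1 ≤ (EseqR G (pad G σs) k).card).card : ℝ)
              = ((Finset.univ.filter fun σs : Fin m → EdgeRanking G =>
                1 ≤ (EseqR G (pad G σs) k).card).card : ℝ) * 2 ^ k / 2 ^ k := by
                field_simp
            _ ≤ (m : ℝ) * (Fintype.card (EdgeRanking G) : ℝ) ^ m / 2 ^ k := by gcongr
            _ = (Fintype.card (EdgeRanking G) : ℝ) ^ m * ((m : ℝ) * (2 : ℝ)⁻¹ ^ k) := by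
                rw [inv_pow]; ring
      have hana := analytic m hm1
      have hXpos : (0 : ℝ) < (Fintype.card (Fin m → EdgeRanking G) : ℝ) := by
        have : 0 < Fintype.card (Fin m → EdgeRanking G) := Fintype.card_pos
        exact_mod_cast this
      rw [div_le_iff₀ hXpos, hswap]
      have hcardR : (Fintype.card (Fin m → EdgeRanking G) : ℝ)
          = ((Fintype.card (EdgeRanking G) : ℝ)) ^ m := by
        rw [hcard]; push_cast; ring
      calc ∑ k ∈ Finset.range m,
            ((Finset.univ.filter fun σs : Fin m → EdgeRanking G =>
              1 ≤ (EseqR G (pad G σs) k).card).card : ℝ)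
          ≤ ∑ k ∈ Finset.range m, ((Fintype.card (EdgeRanking G) : ℝ)) ^ m
            * min 1 ((m : ℝ) * (2 : ℝ)⁻¹ ^ k) := Finset.sum_le_sum hterm
        _ = ((Fintype.card (EdgeRanking G) : ℝ)) ^ m
            * ∑ k ∈ Finset.range m, min 1 ((m : ℝ) * (2 : ℝ)⁻¹ ^ k) := by
            rw [Finset.mul_sum]
        _ ≤ ((Fintype.card (EdgeRanking G) : ℝ)) ^ m
            * (Real.logb 2 (m : ℝ) + 2) := by
            apply mul_le_mul_of_nonneg_left hana (by positivity)
        _ = (Real.logb 2 (m : ℝ) + 2)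
            * (Fintype.card (Fin m → EdgeRanking G) : ℝ) := by
            rw [hcardR]; ring
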